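/- Let K be a convex body in ℝⁿ. Then the function (x, y) ↦ b*_K(x, y) is finite, positive, and continuous on (int K) × (ℝⁿ \ {0}). -/

import Mathlib

/-- A convex body in ℝⁿ: a compact convex set with nonempty interior. -/
def IsConvexBody {n : ℕ} (K : Set (EuclideanSpace ℝ (Fin n))) : Prop :=
  IsCompact K ∧ Convex ℝ K ∧ (interior K).Nonempty

/-- The ellipse with parameters `(a, b)` through `x` in direction `y`,
`θ ↦ (cos θ)•a + b(sin θ)•y + (x - a)`, is inscribed in `K`. -/
def InscribedEllipse {n : ℕ} (K : Set (EuclideanSpace ℝ (Fin n)))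
    (x y a : EuclideanSpace ℝ (Fin n)) (b : ℝ) : Prop :=
  ∀ θ : ℝ, (Real.cos θ) • a + (b * Real.sin θ) • y + (x - a) ∈ K

/-- `b*_K(x,y)`: the supremum of `b > 0` such that some ellipse with parameters
`(a,b)` through `x` in direction `y` is inscribed in `K`. -/
noncomputable def bStar {n : ℕ} (K : Set (EuclideanSpace ℝ (Fin n)))
    (x y : EuclideanSpace ℝ (Fin n)) : ℝ :=
  sSup { b : ℝ | 0 < b ∧ ∃ a, InscribedEllipse K x y a b }

section aux
variable {n : ℕ} {K : Set (EuclideanSpace ℝ (Fin n))}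

lemma ellipse_bound {x y a : EuclideanSpace ℝ (Fin n)} {b R : ℝ}
    (hR : K ⊆ Metric.closedBall 0 R) (hb : 0 < b)
    (hE : InscribedEllipse K x y a b) : b * ‖y‖ ≤ R := by
  have h1 := hR (hE (Real.pi/2))
  have h2 := hR (hE (-(Real.pi/2)))
  rw [Metric.mem_closedBall, dist_zero_right] at h1 h2
  have hdiff :
      ((Real.cos (Real.pi/2)) • a + (b * Real.sin (Real.pi/2)) • y + (x - a)) -
      ((Real.cos (-(Real.pi/2))) • a + (b * Real.sin (-(Real.pi/2))) • y + (x - a))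
      = (2*b) • y := by
    rw [Real.cos_neg, Real.sin_neg, Real.cos_pi_div_two, Real.sin_pi_div_two]
    module
  have h3 : ‖(2*b) • y‖ ≤ R + R := by
    rw [← hdiff]
    exact (norm_sub_le _ _).trans (add_le_add h1 h2)
  rw [norm_smul, Real.norm_eq_abs, abs_of_nonneg (by linarith : (0:ℝ) ≤ 2*b)] at h3
  nlinarith [norm_nonneg y]

lemma segment_inscribed {x y : EuclideanSpace ℝ (Fin n)} {r b : ℝ}
    (hball : Metric.closedBall x r ⊆ K) (hb : 0 < b) (hby : b * ‖y‖ ≤ r) :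
    InscribedEllipse K x y 0 b := by
  intro θ
  apply hball
  rw [Metric.mem_closedBall, dist_eq_norm]
  have h0 : (Real.cos θ) • (0:EuclideanSpace ℝ (Fin n)) + (b * Real.sin θ) • y + (x - 0) - x
      = (b * Real.sin θ) • y := by module
  rw [h0, norm_smul, Real.norm_eq_abs]
  have h1 : |b * Real.sin θ| ≤ b := by
    rw [abs_mul, abs_of_pos hb]
    nlinarith [Real.abs_sin_le_one θ]
  nlinarith [norm_nonneg y]

lemma transfer {z x y a x' y' : EuclideanSpace ℝ (Fin n)} {r b b' lam : ℝ}
    (hconv : Convex ℝ K) (hball : Metric.closedBall z r ⊆ K)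
    (hlam0 : 0 < lam) (hlam1 : lam ≤ 1)
    (hE : InscribedEllipse K x y a b)
    (hcond : ‖x' - ((1-lam) • x + lam • z)‖ + ‖b' • y' - ((1-lam)*b) • y‖ ≤ lam * r) :
    InscribedEllipse K x' y' ((1-lam) • a) b' := by
  intro θ
  set p := (Real.cos θ) • a + (b * Real.sin θ) • y + (x - a) with hp
  have hpK : p ∈ K := hE θ
  set d := (x' - ((1-lam) • x + lam • z)) + (Real.sin θ) • (b' • y' - ((1-lam)*b) • y) with hd
  have hdnorm : ‖d‖ ≤ lam * r := by
    have h1 : ‖(Real.sin θ) • (b' • y' - ((1-lam)*b) • y)‖ ≤ ‖b' • y' - ((1-lam)*b) • y‖ := by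
      rw [norm_smul, Real.norm_eq_abs]
      nlinarith [Real.abs_sin_le_one θ, norm_nonneg (b' • y' - ((1-lam)*b) • y),
        abs_nonneg (Real.sin θ)]
    calc ‖d‖ ≤ ‖x' - ((1-lam) • x + lam • z)‖ + ‖(Real.sin θ) • (b' • y' - ((1-lam)*b) • y)‖ :=
        norm_add_le _ _
      _ ≤ ‖x' - ((1-lam) • x + lam • z)‖ + ‖b' • y' - ((1-lam)*b) • y‖ := by linarith
      _ ≤ lam * r := hcond
  have hzmem : z + lam⁻¹ • d ∈ K := by
    apply hball
    rw [Metric.mem_closedBall, dist_eq_norm]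
    have he : z + lam⁻¹ • d - z = lam⁻¹ • d := by abel
    rw [he, norm_smul, Real.norm_eq_abs, abs_inv, abs_of_pos hlam0]
    rw [inv_mul_le_iff₀ hlam0]
    linarith
  have hid : (Real.cos θ) • ((1-lam) • a) + (b' * Real.sin θ) • y' + (x' - (1-lam) • a)
      = (1-lam) • p + lam • (z + lam⁻¹ • d) := by
    have hsum : lam • (z + lam⁻¹ • d) = lam • z + d := by
      rw [smul_add, smul_smul, mul_inv_cancel₀ hlam0.ne', one_smul]
    rw [hsum, hp, hd]
    module
  rw [hid]
  exact hconv hpK hzmem (by linarith) hlam0.le (by ring)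

lemma interior_ball (x : EuclideanSpace ℝ (Fin n)) (hx : x ∈ interior K) :
    ∃ r > 0, Metric.closedBall x r ⊆ K := by
  have h := mem_interior_iff_mem_nhds.mp hx
  obtain ⟨ε, hε, hsub⟩ := Metric.mem_nhds_iff.mp h
  exact ⟨ε/2, by linarith, (Metric.closedBall_subset_ball (by linarith)).trans hsub⟩

end aux

set_option maxHeartbeats 1600000 in
theorem stmt_5 {n : ℕ} (hn : 1 ≤ n) (K : Set (EuclideanSpace ℝ (Fin n)))
    (hK : IsConvexBody K) :
    (∀ x ∈ interior K, ∀ y : EuclideanSpace ℝ (Fin n), y ≠ 0 →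
      BddAbove { b : ℝ | 0 < b ∧ ∃ a, InscribedEllipse K x y a b } ∧ 0 < bStar K x y) ∧
    ContinuousOn
      (fun p : EuclideanSpace ℝ (Fin n) × EuclideanSpace ℝ (Fin n) => bStar K p.1 p.2)
      ((interior K) ×ˢ { y : EuclideanSpace ℝ (Fin n) | y ≠ 0 }) := by
  obtain ⟨hKcomp, hKconv, hKint⟩ := hK
  obtain ⟨R₀, hR₀⟩ := hKcomp.isBounded.subset_closedBall 0
  set R : ℝ := max R₀ 1 with hRdef
  have hR : K ⊆ Metric.closedBall 0 R :=
    hR₀.trans (Metric.closedBall_subset_closedBall (le_max_left _ _))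
  have hR1 : (1:ℝ) ≤ R := le_max_right _ _
  -- Part 1
  have H1 : ∀ x ∈ interior K, ∀ y : EuclideanSpace ℝ (Fin n), y ≠ 0 →
      BddAbove { b : ℝ | 0 < b ∧ ∃ a, InscribedEllipse K x y a b } ∧ 0 < bStar K x y := by
    intro x hx y hy
    have hy' : 0 < ‖y‖ := norm_pos_iff.mpr hy
    obtain ⟨r, hr, hball⟩ := interior_ball x hx
    have hbdd : BddAbove { b : ℝ | 0 < b ∧ ∃ a, InscribedEllipse K x y a b } := by
      refine ⟨R / ‖y‖, fun b hb => ?_⟩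
      obtain ⟨hbpos, a, hE⟩ := hb
      exact (le_div_iff₀ hy').mpr (ellipse_bound hR hbpos hE)
    have hmem : r / ‖y‖ ∈ { b : ℝ | 0 < b ∧ ∃ a, InscribedEllipse K x y a b } := by
      refine ⟨div_pos hr hy', 0, segment_inscribed hball (div_pos hr hy') ?_⟩
      rw [div_mul_cancel₀ _ hy'.ne']
    refine ⟨hbdd, lt_of_lt_of_le (div_pos hr hy') (le_csSup hbdd hmem)⟩
  refine ⟨H1, ?_⟩
  -- Part 2: continuity
  rw [Metric.continuousOn_iff]
  rintro ⟨x₀, y₀⟩ ⟨hx₀, hy₀⟩ ε hε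
  simp only [Set.mem_setOf_eq] at hy₀
  have hy₀' : 0 < ‖y₀‖ := norm_pos_iff.mpr hy₀
  obtain ⟨r, hr, hball⟩ := interior_ball x₀ hx₀
  set C : ℝ := 2 * R / ‖y₀‖ with hCdef
  have hC : 0 < C := div_pos (by linarith) hy₀'
  set β : ℝ := bStar K x₀ y₀ with hβdef
  have hβpos : 0 < β := (H1 x₀ hx₀ y₀ hy₀).2
  have hbdd₀ := (H1 x₀ hx₀ y₀ hy₀).1
  have hβC : β ≤ C := by
    refine Real.sSup_le (fun b hb => ?_) hC.le
    obtain ⟨hbpos, a, hE⟩ := hb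
    have := ellipse_bound hR hbpos hE
    rw [hCdef, le_div_iff₀ hy₀']
    nlinarith
  set lam : ℝ := min (1/2) (ε/(4*C)) with hlamdef
  have hlam0 : 0 < lam := lt_min (by norm_num) (div_pos hε (by linarith))
  have hlamh : lam ≤ 1/2 := min_le_left _ _
  have hlamC : lam * C ≤ ε/4 := by
    have h1 : lam ≤ ε/(4*C) := min_le_right _ _
    rw [le_div_iff₀ (by linarith : (0:ℝ) < 4*C)] at h1
    nlinarith
  set δ : ℝ := min (lam * r / (2*(C+1))) (‖y₀‖/2) with hδdef
  have hδ0 : 0 < δ := lt_min (by positivity) (by positivity)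
  refine ⟨δ, hδ0, ?_⟩
  rintro ⟨x, y⟩ ⟨hx, hy⟩ hdist
  simp only [Set.mem_setOf_eq] at hy
  rw [Prod.dist_eq, max_lt_iff] at hdist
  obtain ⟨hdx, hdy⟩ := hdist
  rw [dist_eq_norm] at hdx hdy
  have hy' : 0 < ‖y‖ := norm_pos_iff.mpr hy
  have hδ1 : δ ≤ lam * r / (2*(C+1)) := min_le_left _ _
  have hδ2 : δ ≤ ‖y₀‖/2 := min_le_right _ _
  have hyhalf : ‖y₀‖/2 ≤ ‖y‖ := by
    have h1 : ‖y₀‖ - ‖y‖ ≤ ‖y₀ - y‖ := norm_sub_norm_le _ _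
    rw [norm_sub_rev] at h1
    linarith
  -- every b in S(x,y) is at most C
  have hbndS : ∀ b : ℝ, 0 < b → (∃ a, InscribedEllipse K x y a b) → b ≤ C := by
    intro b hbpos ⟨a, hE⟩
    have h1 := ellipse_bound hR hbpos hE
    rw [hCdef, le_div_iff₀ hy₀']
    nlinarith
  have hsumbound : ‖x - x₀‖ + C * ‖y - y₀‖ ≤ lam * r / 2 := by
    have h1 : ‖x - x₀‖ + C * ‖y - y₀‖ < (C+1) * δ := by nlinarith
    have h2 : (C+1) * δ ≤ lam * r / 2 := by
      rw [hδdef]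
      calc (C+1) * min (lam * r / (2*(C+1))) (‖y₀‖/2) ≤ (C+1) * (lam * r / (2*(C+1))) :=
            mul_le_mul_of_nonneg_left (min_le_left _ _) (by linarith)
        _ = lam * r / 2 := by field_simp
    linarith
  have h1l : (0:ℝ) < 1 - lam := by linarith
  -- Upper bound: bStar K x y ≤ β / (1 - lam)
  have husc : bStar K x y ≤ β / (1 - lam) := by
    refine Real.sSup_le (fun b hb => ?_) (by positivity)
    obtain ⟨hbpos, a, hE⟩ := hb
    have hbC : b ≤ C := hbndS b hbpos ⟨a, hE⟩
    have hcond : ‖x₀ - ((1-lam) • x + lam • x₀)‖ +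
        ‖((1-lam)*b) • y₀ - ((1-lam)*b) • y‖ ≤ lam * r := by
      have e1 : x₀ - ((1-lam) • x + lam • x₀) = (1-lam) • (x₀ - x) := by module
      have e2 : ((1-lam)*b) • y₀ - ((1-lam)*b) • y = ((1-lam)*b) • (y₀ - y) := by module
      rw [e1, e2, norm_smul, norm_smul, Real.norm_eq_abs, Real.norm_eq_abs,
        abs_of_pos h1l, abs_of_pos (by positivity : (0:ℝ) < (1-lam)*b)]
      have e3 : ‖x₀ - x‖ = ‖x - x₀‖ := norm_sub_rev _ _
      have e4 : ‖y₀ - y‖ = ‖y - y₀‖ := norm_sub_rev _ _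
      rw [e3, e4]
      have h5 : (1-lam) * ‖x - x₀‖ ≤ ‖x - x₀‖ := by nlinarith [norm_nonneg (x - x₀)]
      have hbb : (1-lam)*b ≤ C := by nlinarith [mul_nonneg hlam0.le hbpos.le]
      have h6 : (1-lam)*b * ‖y - y₀‖ ≤ C * ‖y - y₀‖ :=
        mul_le_mul_of_nonneg_right hbb (norm_nonneg _)
      nlinarith [hr, hlam0]
    have htr := transfer hKconv hball hlam0 (by linarith) hE hcond
    have hmem : (1-lam)*b ∈ { b : ℝ | 0 < b ∧ ∃ a, InscribedEllipse K x₀ y₀ a b } :=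
      ⟨by positivity, _, htr⟩
    have hle : (1-lam)*b ≤ β := le_csSup hbdd₀ hmem
    rw [le_div_iff₀ h1l]
    linarith [hle]
  -- Lower bound
  have hne : { b : ℝ | 0 < b ∧ ∃ a, InscribedEllipse K x₀ y₀ a b }.Nonempty :=
    ⟨r / ‖y₀‖, div_pos hr hy₀', 0, segment_inscribed hball (div_pos hr hy₀')
      (by rw [div_mul_cancel₀ _ hy₀'.ne'])⟩
  have hβs : sSup { b : ℝ | 0 < b ∧ ∃ a, InscribedEllipse K x₀ y₀ a b } = β := rfl
  obtain ⟨b, hbS, hblt⟩ := exists_lt_of_lt_csSup hne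
    (show β - ε/4 < sSup { b : ℝ | 0 < b ∧ ∃ a, InscribedEllipse K x₀ y₀ a b } by
      rw [hβs]; linarith)
  obtain ⟨hbpos, a, hE⟩ := hbS
  have hbC : b ≤ C := by
    have h1 := ellipse_bound hR hbpos hE
    rw [hCdef, le_div_iff₀ hy₀']
    nlinarith
  have hlsc : (1-lam)*b ≤ bStar K x y := by
    have hcond : ‖x - ((1-lam) • x₀ + lam • x₀)‖ +
        ‖((1-lam)*b) • y - ((1-lam)*b) • y₀‖ ≤ lam * r := by
      have e1 : (1-lam) • x₀ + lam • x₀ = x₀ := by module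
      have e2 : ((1-lam)*b) • y - ((1-lam)*b) • y₀ = ((1-lam)*b) • (y - y₀) := by module
      rw [e1, e2, norm_smul, Real.norm_eq_abs, abs_of_pos (by positivity : (0:ℝ) < (1-lam)*b)]
      have hbb : (1-lam)*b ≤ C := by nlinarith [mul_nonneg hlam0.le hbpos.le]
      have h6 : (1-lam)*b * ‖y - y₀‖ ≤ C * ‖y - y₀‖ :=
        mul_le_mul_of_nonneg_right hbb (norm_nonneg _)
      nlinarith [hr, hlam0]
    have htr := transfer hKconv hball hlam0 (by linarith) hE hcond
    exact le_csSup (H1 x hx y hy).1 ⟨by positivity, _, htr⟩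
  -- conclude
  show dist (bStar K x y) (bStar K x₀ y₀) < ε
  rw [Real.dist_eq, ← hβdef, abs_lt]
  have h1 : lam * b ≤ lam * C := mul_le_mul_of_nonneg_left hbC hlam0.le
  have hexp : (1-lam)*b = b - lam*b := by ring
  have h2 : β / (1-lam) ≤ β + 2 * lam * β := by
    rw [div_le_iff₀ h1l]
    nlinarith [mul_nonneg (mul_nonneg hlam0.le hβpos.le) (show (0:ℝ) ≤ 1-2*lam by linarith)]
  have h3 : 2 * lam * β ≤ 2 * lam * C := by nlinarith
  constructor
  · linarith [hlsc]
  · linarith [husc]
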